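/- Let P and Q be two commuting pseudodifferential operators, with P_+ and Q_+ their differential parts (nonnegative powers of ∂) and P_−, Q_− their strictly negative parts. Suppose the evolution derivations X_P, X_Q act by X_P(Q) = [P_+, Q] and X_Q(P) = [Q_+, P]. Then X_P(Q_+) − X_Q(P_+) − [P_+, Q_+] = 0. -/
import Mathlib

/-- **Wilson's formula for extended Lax flows.** In an abstract ring `A` of formal
pseudodifferential operators, let `plus` be the additive projection onto the
differential part (`P₊`), so `P₋ = P − P₊`.  It is idempotent, the differential
operators are closed under commutators, and the commutator of two strictly negative
parts has zero differential part.  If `P` and `Q` commute, then (with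
`X_P(Q₊) = ([P₊, Q])₊` since the evolution derivation `X_P(Q) = [P₊,Q]` acts on
coefficients and commutes with the projection):
`X_P(Q₊) − X_Q(P₊) − [P₊, Q₊] = 0`. -/
theorem stmt2 {A : Type*} [Ring A]
    (plus : A →+ A)
    (hidem : ∀ a : A, plus (plus a) = plus a)
    (hplus_closed : ∀ a b : A,
      plus (plus a * plus b - plus b * plus a) = plus a * plus b - plus b * plus a)
    (hminus : ∀ a b : A,
      plus ((a - plus a) * (b - plus b) - (b - plus b) * (a - plus a)) = 0)
    (P Q : A) (hPQ : P * Q = Q * P) :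
    plus (plus P * Q - Q * plus P) - plus (plus Q * P - P * plus Q)
      - (plus P * plus Q - plus Q * plus P) = 0 := by
  have key : (plus P * Q - Q * plus P) - (plus Q * P - P * plus Q)
      = (plus P * plus Q - plus Q * plus P)
        - ((P - plus P) * (Q - plus Q) - (Q - plus Q) * (P - plus P)) := by
    linear_combination (norm := noncomm_ring) hPQ
  have h1 : plus (plus P * Q - Q * plus P) - plus (plus Q * P - P * plus Q)
      = plus ((plus P * Q - Q * plus P) - (plus Q * P - P * plus Q)) :=
    (map_sub plus _ _).symm
  rw [h1, key, map_sub, hplus_closed, hminus]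
  abel
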